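/- For every solution x of the COVID-19 system with x(0) in the open positive orthant (0,∞)⁷, the total population satisfies Λ/(μ+d_I+d_A+d_H) ≤ liminf_{t→∞} N(t) and limsup_{t→∞} N(t) ≤ Λ/μ; equivalently, the distance from x(t) to the region D⁰₀ = { y in the nonnegative orthant : Λ/(μ+d_I+d_A+d_H) ≤ N(y) ≤ Λ/μ } tends to 0 as t → ∞. -/

import Mathlib

open scoped BigOperators

/-- The vector field of the deterministic SQEAIHR COVID-19 model.
State: `x = (S, Q, E, A, I, H, R)` indexed by `Fin 7`. -/
noncomputable def covidF (Λ b q lam μ σ εA γA dA εI γI dI γH dH θ p β₁ β₂ : ℝ)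
    (x : Fin 7 → ℝ) : Fin 7 → ℝ :=
  ![Λ - (β₁ - β₂ * x 4 / (b + x 4)) * x 0 * (x 4 + θ * x 3) + lam * x 1 - (μ + q) * x 0,
    q * x 0 - (μ + lam) * x 1,
    (β₁ - β₂ * x 4 / (b + x 4)) * x 0 * (x 4 + θ * x 3) - (μ + σ) * x 2,
    (1 - p) * σ * x 2 - (μ + εA + γA + dA) * x 3,
    σ * p * x 2 - (μ + εI + γI + dI) * x 4,
    εI * x 4 + εA * x 3 - (μ + dH + γH) * x 5,
    γH * x 5 + γI * x 4 + γA * x 3 - μ * x 6]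

/-- A solution of the system on `[0, ∞)`: a function differentiable (within `[0,∞)`) whose
derivative equals the vector field at every `t ≥ 0`. -/
def IsSolution (F : (Fin 7 → ℝ) → Fin 7 → ℝ) (x : ℝ → Fin 7 → ℝ) : Prop :=
  ∀ t : ℝ, 0 ≤ t → HasDerivWithinAt x (F (x t)) (Set.Ici (0 : ℝ)) t

open Filter Set Metric

set_option maxHeartbeats 1000000

/-- asymptotic bounds on the total population, and attraction to the
region `D⁰₀ = { y ≥ 0 : Λ/(μ+d_I+d_A+d_H) ≤ N(y) ≤ Λ/μ }`. -/
theorem covid_region_D00_globally_attracting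
    (Λ b q lam μ σ εA γA dA εI γI dI γH dH θ p β₁ β₂ : ℝ)
    (hΛ : 0 < Λ) (hb : 0 < b) (hq : 0 < q) (hlam : 0 < lam) (hμ : 0 < μ)
    (hσ : 0 < σ) (hεA : 0 < εA) (hγA : 0 < γA) (hdA : 0 < dA)
    (hεI : 0 < εI) (hγI : 0 < γI) (hdI : 0 < dI) (hγH : 0 < γH) (hdH : 0 < dH)
    (hθ : θ ∈ Set.Ioo (0 : ℝ) 1) (hp : p ∈ Set.Ioo (0 : ℝ) 1)
    (hβ₂ : 0 < β₂) (hβ : β₂ ≤ β₁)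
    (x : ℝ → Fin 7 → ℝ)
    (hx : IsSolution (covidF Λ b q lam μ σ εA γA dA εI γI dI γH dH θ p β₁ β₂) x)
    (h0 : ∀ i, 0 < x 0 i) :
    Λ / (μ + dI + dA + dH) ≤ Filter.liminf (fun t => ∑ i, x t i) Filter.atTop ∧
    Filter.limsup (fun t => ∑ i, x t i) Filter.atTop ≤ Λ / μ ∧
    Filter.Tendsto
      (fun t => Metric.infDist (x t)
        {y : Fin 7 → ℝ | (∀ i, 0 ≤ y i) ∧
          Λ / (μ + dI + dA + dH) ≤ (∑ i, y i) ∧ (∑ i, y i) ≤ Λ / μ})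
      Filter.atTop (nhds 0) := by
  obtain ⟨hθ0, hθ1⟩ := hθ
  obtain ⟨hp0, hp1⟩ := hp
  have hβ₁ : 0 < β₁ := lt_of_lt_of_le hβ₂ hβ
  set F := covidF Λ b q lam μ σ εA γA dA εI γI dI γH dH θ p β₁ β₂ with hF
  have e0 : ∀ y : Fin 7 → ℝ, F y 0 =
      Λ - (β₁ - β₂ * y 4 / (b + y 4)) * y 0 * (y 4 + θ * y 3) + lam * y 1 - (μ + q) * y 0 :=
    fun _ => rfl
  have e1 : ∀ y : Fin 7 → ℝ, F y 1 = q * y 0 - (μ + lam) * y 1 := fun _ => rfl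
  have e2 : ∀ y : Fin 7 → ℝ, F y 2 =
      (β₁ - β₂ * y 4 / (b + y 4)) * y 0 * (y 4 + θ * y 3) - (μ + σ) * y 2 := fun _ => rfl
  have e3 : ∀ y : Fin 7 → ℝ, F y 3 = (1 - p) * σ * y 2 - (μ + εA + γA + dA) * y 3 := fun _ => rfl
  have e4 : ∀ y : Fin 7 → ℝ, F y 4 = σ * p * y 2 - (μ + εI + γI + dI) * y 4 := fun _ => rfl
  have e5 : ∀ y : Fin 7 → ℝ, F y 5 = εI * y 4 + εA * y 3 - (μ + dH + γH) * y 5 := fun _ => rfl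
  have e6 : ∀ y : Fin 7 → ℝ, F y 6 = γH * y 5 + γI * y 4 + γA * y 3 - μ * y 6 := fun _ => rfl
  have hxd : ∀ t, 0 ≤ t → ∀ i, HasDerivWithinAt (fun s => x s i) (F (x t) i) (Set.Ici 0) t :=
    fun t ht i => hasDerivWithinAt_pi.1 (hx t ht) i
  have hcont : ContinuousOn x (Set.Ici 0) := fun t ht => (hx t ht).continuousWithinAt
  have hconti : ∀ i, ContinuousOn (fun s => x s i) (Set.Ici 0) :=
    fun i => (continuous_apply i).comp_continuousOn hcont
  have hexpd : ∀ (c u : ℝ), HasDerivAt (fun s => Real.exp (c * s)) (Real.exp (c * u) * c) u := by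
    intro c u
    simpa using ((hasDerivAt_id u).const_mul c).exp
  -- bounds on the effective transmission rate when I ≥ 0
  have hbeff : ∀ I : ℝ, 0 ≤ I →
      0 ≤ β₁ - β₂ * I / (b + I) ∧ β₁ - β₂ * I / (b + I) ≤ β₁ := by
    intro I hI
    have hbI : 0 < b + I := by linarith
    have h1 : 0 ≤ β₂ * I / (b + I) := by positivity
    have h2 : β₂ * I / (b + I) ≤ β₂ := by
      rw [div_le_iff₀ hbI]; nlinarith
    exact ⟨by linarith, by linarith⟩
  ------------------------------------------------------------------
  -- Positivity of all components for all t ≥ 0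
  ------------------------------------------------------------------
  have hpos : ∀ t, 0 ≤ t → ∀ i, 0 < x t i := by
    intro T hT
    by_contra hcon
    push_neg at hcon
    obtain ⟨i0, hi0⟩ := hcon
    set s : Set ℝ := ⋃ j : Fin 7, (Set.Icc 0 T ∩ (fun t => x t j) ⁻¹' Set.Iic 0) with hsdef
    have hsne : s.Nonempty := ⟨T, Set.mem_iUnion.2 ⟨i0, ⟨⟨hT, le_refl T⟩, hi0⟩⟩⟩
    have hsclosed : IsClosed s :=
      isClosed_iUnion_of_finite fun j =>
        ((hconti j).mono Set.Icc_subset_Ici_self).preimage_isClosed_of_isClosed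
          isClosed_Icc isClosed_Iic
    have hsub : s ⊆ Set.Icc 0 T := by
      intro u hu
      obtain ⟨j, hj⟩ := Set.mem_iUnion.1 hu
      exact hj.1
    have hbdd : BddBelow s := ⟨0, fun y hy => (hsub hy).1⟩
    set t₀ := sInf s with ht₀def
    have ht₀s : t₀ ∈ s := hsclosed.csInf_mem hsne hbdd
    obtain ⟨j0, hj0mem⟩ := Set.mem_iUnion.1 ht₀s
    obtain ⟨⟨ht₀0, ht₀T⟩, hj0⟩ := hj0mem
    have hj0' : x t₀ j0 ≤ 0 := hj0
    have hlt : ∀ u ∈ Set.Ico (0:ℝ) t₀, ∀ k, 0 < x u k := by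
      intro u hu k
      by_contra hk
      push_neg at hk
      have hus : u ∈ s := Set.mem_iUnion.2 ⟨k, ⟨⟨hu.1, hu.2.le.trans ht₀T⟩, hk⟩⟩
      exact absurd (csInf_le hbdd hus) (not_le.2 hu.2)
    have ht₀pos : 0 < t₀ := by
      rcases ht₀0.lt_or_eq with h | h
      · exact h
      · exfalso; rw [← h] at hj0'; exact absurd hj0' (not_le.2 (h0 j0))
    have hnn : ∀ u ∈ Set.Icc (0:ℝ) t₀, ∀ k, 0 ≤ x u k := by
      intro u hu k
      rcases hu.2.lt_or_eq with h | h
      · exact (hlt u ⟨hu.1, h⟩ k).le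
      · have hcl : t₀ ∈ closure (Set.Ico (0:ℝ) t₀) := by
          rw [closure_Ico ht₀pos.ne]
          exact ⟨ht₀0, le_refl _⟩
        have hne : (nhdsWithin t₀ (Set.Ico (0:ℝ) t₀)).NeBot :=
          mem_closure_iff_nhdsWithin_neBot.1 hcl
        have hten : Tendsto (fun s => x s k) (nhdsWithin t₀ (Set.Ico (0:ℝ) t₀)) (nhds (x t₀ k)) :=
          ((hconti k) t₀ ht₀0).mono_left (nhdsWithin_mono _ (fun y hy => hy.1))
        rw [h]
        exact ge_of_tendsto hten (eventually_mem_nhdsWithin.mono (fun y hy => (hlt y hy k).le))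
    obtain ⟨C0, hC0⟩ :=
      (isCompact_Icc (a := (0:ℝ)) (b := t₀)).exists_bound_of_continuousOn
        (hcont.mono Set.Icc_subset_Ici_self)
    set C := max C0 0 with hC
    have hCnn : (0:ℝ) ≤ C := le_max_right _ _
    have hxleC : ∀ u ∈ Set.Icc (0:ℝ) t₀, ∀ k, x u k ≤ C := by
      intro u hu k
      calc x u k ≤ |x u k| := le_abs_self _
        _ = ‖x u k‖ := (Real.norm_eq_abs _).symm
        _ ≤ ‖x u‖ := norm_le_pi_norm (x u) k
        _ ≤ C0 := hC0 u hu
        _ ≤ C := le_max_left _ _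
    set c := μ + q + lam + σ + εA + γA + dA + εI + γI + dI + γH + dH + β₁ * (C + C) with hc
    have key : ∀ u ∈ Set.Icc (0:ℝ) t₀, ∀ k : Fin 7, -(c * x u k) ≤ F (x u) k := by
      intro u hu k
      have hS := hnn u hu 0
      have hQ := hnn u hu 1
      have hE := hnn u hu 2
      have hA := hnn u hu 3
      have hI := hnn u hu 4
      have hH := hnn u hu 5
      have hR := hnn u hu 6
      have hAC := hxleC u hu 3
      have hIC := hxleC u hu 4
      obtain ⟨hbe1, hbe2⟩ := hbeff (x u 4) hI
      have hIA : 0 ≤ x u 4 + θ * x u 3 := add_nonneg hI (mul_nonneg hθ0.le hA)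
      have hIAC : x u 4 + θ * x u 3 ≤ C + C := by
        have hθA : θ * x u 3 ≤ 1 * x u 3 := mul_le_mul_of_nonneg_right hθ1.le hA
        linarith
      have hprod : (β₁ - β₂ * x u 4 / (b + x u 4)) * x u 0 * (x u 4 + θ * x u 3)
          ≤ β₁ * (C + C) * x u 0 := by
        have h1 : (β₁ - β₂ * x u 4 / (b + x u 4)) * x u 0 ≤ β₁ * x u 0 :=
          mul_le_mul_of_nonneg_right hbe2 hS
        calc (β₁ - β₂ * x u 4 / (b + x u 4)) * x u 0 * (x u 4 + θ * x u 3)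
            ≤ β₁ * x u 0 * (C + C) := by
              apply mul_le_mul h1 hIAC hIA (mul_nonneg hβ₁.le hS)
          _ = β₁ * (C + C) * x u 0 := by ring
      have hprod0 : 0 ≤ (β₁ - β₂ * x u 4 / (b + x u 4)) * x u 0 * (x u 4 + θ * x u 3) :=
        mul_nonneg (mul_nonneg hbe1 hS) hIA
      fin_cases k
      · show -(c * x u 0) ≤ F (x u) 0
        rw [e0]
        have hrest : 0 ≤ (lam + σ + εA + γA + dA + εI + γI + dI + γH + dH) * x u 0 := by
          have : (0:ℝ) ≤ lam + σ + εA + γA + dA + εI + γI + dI + γH + dH := by positivity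
          exact mul_nonneg this hS
        rw [hc]
        linarith [hprod, hrest, mul_nonneg hlam.le hQ, hΛ.le]
      · show -(c * x u 1) ≤ F (x u) 1
        rw [e1, hc]
        have : 0 ≤ (q + σ + εA + γA + dA + εI + γI + dI + γH + dH + β₁ * (C + C)) * x u 1 := by
          have h' : (0:ℝ) ≤ q + σ + εA + γA + dA + εI + γI + dI + γH + dH + β₁ * (C + C) := by
            positivity
          exact mul_nonneg h' hQ
        linarith [this, mul_nonneg hq.le hS]
      · show -(c * x u 2) ≤ F (x u) 2
        rw [e2, hc]
        have : 0 ≤ (q + lam + εA + γA + dA + εI + γI + dI + γH + dH + β₁ * (C + C)) * x u 2 := by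
          have h' : (0:ℝ) ≤ q + lam + εA + γA + dA + εI + γI + dI + γH + dH + β₁ * (C + C) := by
            positivity
          exact mul_nonneg h' hE
        linarith [this, hprod0]
      · show -(c * x u 3) ≤ F (x u) 3
        rw [e3, hc]
        have : 0 ≤ (q + lam + σ + εI + γI + dI + γH + dH + β₁ * (C + C)) * x u 3 := by
          have h' : (0:ℝ) ≤ q + lam + σ + εI + γI + dI + γH + dH + β₁ * (C + C) := by positivity
          exact mul_nonneg h' hA
        linarith [this, mul_nonneg (mul_nonneg (by linarith : (0:ℝ) ≤ 1 - p) hσ.le) hE]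
      · show -(c * x u 4) ≤ F (x u) 4
        rw [e4, hc]
        have : 0 ≤ (q + lam + σ + εA + γA + dA + γH + dH + β₁ * (C + C)) * x u 4 := by
          have h' : (0:ℝ) ≤ q + lam + σ + εA + γA + dA + γH + dH + β₁ * (C + C) := by positivity
          exact mul_nonneg h' hI
        linarith [this, mul_nonneg (mul_nonneg hσ.le hp0.le) hE]
      · show -(c * x u 5) ≤ F (x u) 5
        rw [e5, hc]
        have : 0 ≤ (q + lam + σ + εA + γA + dA + εI + γI + dI + β₁ * (C + C)) * x u 5 := by
          have h' : (0:ℝ) ≤ q + lam + σ + εA + γA + dA + εI + γI + dI + β₁ * (C + C) := by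
            positivity
          exact mul_nonneg h' hH
        linarith [this, mul_nonneg hεI.le hI, mul_nonneg hεA.le hA]
      · show -(c * x u 6) ≤ F (x u) 6
        rw [e6, hc]
        have : 0 ≤ (q + lam + σ + εA + γA + dA + εI + γI + dI + γH + dH + β₁ * (C + C)) * x u 6 := by
          have h' : (0:ℝ) ≤ q + lam + σ + εA + γA + dA + εI + γI + dI + γH + dH + β₁ * (C + C) := by
            positivity
          exact mul_nonneg h' hR
        linarith [this, mul_nonneg hγH.le hH, mul_nonneg hγI.le hI, mul_nonneg hγA.le hA]
    have hmono : ∀ k : Fin 7, MonotoneOn (fun u => x u k * Real.exp (c * u)) (Set.Icc 0 t₀) := by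
      intro k
      have hcg : ContinuousOn (fun u => x u k * Real.exp (c * u)) (Set.Icc 0 t₀) :=
        ((hconti k).mono Set.Icc_subset_Ici_self).mul
          ((Real.continuous_exp.comp (continuous_const.mul continuous_id)).continuousOn)
      have hd : ∀ u ∈ interior (Set.Icc (0:ℝ) t₀),
          HasDerivAt (fun v => x v k * Real.exp (c * v))
            (F (x u) k * Real.exp (c * u) + x u k * (Real.exp (c * u) * c)) u := by
        intro u hu
        rw [interior_Icc] at hu
        have h1 : HasDerivAt (fun v => x v k) (F (x u) k) u :=
          (hxd u hu.1.le k).hasDerivAt (Ici_mem_nhds hu.1)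
        exact h1.mul (hexpd c u)
      apply monotoneOn_of_deriv_nonneg (convex_Icc 0 t₀) hcg
      · intro u hu
        exact (hd u hu).differentiableAt.differentiableWithinAt
      · intro u hu
        rw [(hd u hu).deriv]
        rw [interior_Icc] at hu
        have hk := key u ⟨hu.1.le, hu.2.le⟩ k
        have he := Real.exp_pos (c * u)
        have h' : 0 ≤ (F (x u) k + c * x u k) * Real.exp (c * u) :=
          mul_nonneg (by linarith) he.le
        linarith [h']
    have hfin := hmono j0 (Set.left_mem_Icc.2 ht₀0) (Set.right_mem_Icc.2 ht₀0) ht₀0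
    simp only [mul_zero, Real.exp_zero, mul_one] at hfin
    have he := Real.exp_pos (c * t₀)
    linarith [h0 j0, mul_nonpos_of_nonpos_of_nonneg hj0' he.le, hfin]
  ------------------------------------------------------------------
  -- The total population N and its differential equation
  ------------------------------------------------------------------
  set N : ℝ → ℝ := fun t => ∑ i, x t i with hNdef
  have hNsum : ∀ t, N t = x t 0 + x t 1 + x t 2 + x t 3 + x t 4 + x t 5 + x t 6 := by
    intro t; rw [hNdef]; simp [Fin.sum_univ_seven]
  have hNcont : ContinuousOn N (Set.Ici 0) := by
    rw [hNdef]
    exact continuousOn_finset_sum _ (fun i _ => hconti i)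
  have hNd : ∀ t, 0 ≤ t → HasDerivWithinAt N
      (Λ - μ * N t - (dA * x t 3 + dI * x t 4 + dH * x t 5)) (Set.Ici 0) t := by
    intro t ht
    have hsum : HasDerivWithinAt N (∑ i, F (x t) i) (Set.Ici 0) t := by
      rw [hNdef]
      exact HasDerivWithinAt.fun_sum (fun i _ => hxd t ht i)
    convert hsum using 1
    rw [Fin.sum_univ_seven, e0, e1, e2, e3, e4, e5, e6, hNsum]
    ring
  have hcomp_le : ∀ t, 0 ≤ t → ∀ i, x t i ≤ N t := by
    intro t ht i
    rw [hNdef]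
    exact Finset.single_le_sum (fun j _ => (hpos t ht j).le) (Finset.mem_univ i)
  have hNt_pos : ∀ t, 0 ≤ t → 0 < N t := by
    intro t ht
    rw [hNdef]
    exact Finset.sum_pos (fun i _ => hpos t ht i) ⟨0, Finset.mem_univ 0⟩
  have hMpos : 0 < μ + dI + dA + dH := by positivity
  ------------------------------------------------------------------
  -- Upper comparison: N T ≤ Λ/μ + (N 0 - Λ/μ) exp(-μT)
  ------------------------------------------------------------------
  have hub : ∀ T, 0 ≤ T → N T ≤ Λ / μ + (N 0 - Λ / μ) * Real.exp (-(μ * T)) := by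
    intro T hT
    have hHD : ∀ u : ℝ, 0 < u →
        HasDerivAt (fun t => (N t - Λ / μ) * Real.exp (μ * t))
          ((Λ - μ * N u - (dA * x u 3 + dI * x u 4 + dH * x u 5)) * Real.exp (μ * u)
            + (N u - Λ / μ) * (Real.exp (μ * u) * μ)) u := by
      intro u hu
      have h1 : HasDerivAt (fun t => N t - Λ / μ)
          (Λ - μ * N u - (dA * x u 3 + dI * x u 4 + dH * x u 5)) u :=
        ((hNd u hu.le).hasDerivAt (Ici_mem_nhds hu)).sub_const _
      exact h1.mul (hexpd μ u)
    have hanti : AntitoneOn (fun t => (N t - Λ / μ) * Real.exp (μ * t)) (Set.Icc 0 T) := by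
      apply antitoneOn_of_deriv_nonpos (convex_Icc 0 T)
      · exact (((hNcont.mono Set.Icc_subset_Ici_self).sub continuousOn_const).mul
          ((Real.continuous_exp.comp (continuous_const.mul continuous_id)).continuousOn))
      · intro u hu
        rw [interior_Icc] at hu
        exact (hHD u hu.1).differentiableAt.differentiableWithinAt
      · intro u hu
        rw [interior_Icc] at hu
        rw [(hHD u hu.1).deriv]
        have hΛμ : Λ / μ * μ = Λ := div_mul_cancel₀ Λ hμ.ne'
        have hD : 0 ≤ dA * x u 3 + dI * x u 4 + dH * x u 5 := by
          have h3 := (hpos u hu.1.le 3).le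
          have h4 := (hpos u hu.1.le 4).le
          have h5 := (hpos u hu.1.le 5).le
          positivity
        have he := Real.exp_pos (μ * u)
        have h3 : Λ / μ * μ * Real.exp (μ * u) = Λ * Real.exp (μ * u) := by rw [hΛμ]
        linarith [mul_nonneg hD he.le, h3]
    have h1 := hanti (Set.left_mem_Icc.2 hT) (Set.right_mem_Icc.2 hT) hT
    simp only [mul_zero, Real.exp_zero, mul_one] at h1
    have he := Real.exp_pos (μ * T)
    rw [Real.exp_neg]
    have h2 : N T - Λ / μ ≤ (N 0 - Λ / μ) * (Real.exp (μ * T))⁻¹ := by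
      rw [← div_eq_mul_inv, le_div_iff₀ he]
      exact h1
    linarith
  ------------------------------------------------------------------
  -- Lower comparison with M = μ + dI + dA + dH
  ------------------------------------------------------------------
  have hlb : ∀ T, 0 ≤ T →
      Λ / (μ + dI + dA + dH) + (N 0 - Λ / (μ + dI + dA + dH))
        * Real.exp (-((μ + dI + dA + dH) * T)) ≤ N T := by
    intro T hT
    have hHD : ∀ u : ℝ, 0 < u →
        HasDerivAt (fun t => (N t - Λ / (μ + dI + dA + dH)) * Real.exp ((μ + dI + dA + dH) * t))
          ((Λ - μ * N u - (dA * x u 3 + dI * x u 4 + dH * x u 5))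
              * Real.exp ((μ + dI + dA + dH) * u)
            + (N u - Λ / (μ + dI + dA + dH))
              * (Real.exp ((μ + dI + dA + dH) * u) * (μ + dI + dA + dH))) u := by
      intro u hu
      have h1 : HasDerivAt (fun t => N t - Λ / (μ + dI + dA + dH))
          (Λ - μ * N u - (dA * x u 3 + dI * x u 4 + dH * x u 5)) u :=
        ((hNd u hu.le).hasDerivAt (Ici_mem_nhds hu)).sub_const _
      exact h1.mul (hexpd (μ + dI + dA + dH) u)
    have hmono2 : MonotoneOn
        (fun t => (N t - Λ / (μ + dI + dA + dH)) * Real.exp ((μ + dI + dA + dH) * t))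
        (Set.Icc 0 T) := by
      apply monotoneOn_of_deriv_nonneg (convex_Icc 0 T)
      · exact (((hNcont.mono Set.Icc_subset_Ici_self).sub continuousOn_const).mul
          ((Real.continuous_exp.comp (continuous_const.mul continuous_id)).continuousOn))
      · intro u hu
        rw [interior_Icc] at hu
        exact (hHD u hu.1).differentiableAt.differentiableWithinAt
      · intro u hu
        rw [interior_Icc] at hu
        rw [(hHD u hu.1).deriv]
        have hΛM : Λ / (μ + dI + dA + dH) * (μ + dI + dA + dH) = Λ :=
          div_mul_cancel₀ Λ hMpos.ne'
        have h3 := hcomp_le u hu.1.le 3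
        have h4 := hcomp_le u hu.1.le 4
        have h5 := hcomp_le u hu.1.le 5
        have he := Real.exp_pos ((μ + dI + dA + dH) * u)
        have hDub : dA * x u 3 + dI * x u 4 + dH * x u 5 ≤ (dI + dA + dH) * N u := by
          linarith [mul_le_mul_of_nonneg_left h3 hdA.le,
            mul_le_mul_of_nonneg_left h4 hdI.le, mul_le_mul_of_nonneg_left h5 hdH.le]
        have h3' : Λ / (μ + dI + dA + dH) * (μ + dI + dA + dH)
            * Real.exp ((μ + dI + dA + dH) * u) = Λ * Real.exp ((μ + dI + dA + dH) * u) := by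
          rw [hΛM]
        linarith [mul_nonneg (sub_nonneg.2 hDub) he.le, h3']
    have h1 := hmono2 (Set.left_mem_Icc.2 hT) (Set.right_mem_Icc.2 hT) hT
    simp only [mul_zero, Real.exp_zero, mul_one] at h1
    have he := Real.exp_pos ((μ + dI + dA + dH) * T)
    rw [Real.exp_neg]
    have h2 : (N 0 - Λ / (μ + dI + dA + dH)) * (Real.exp ((μ + dI + dA + dH) * T))⁻¹
        ≤ N T - Λ / (μ + dI + dA + dH) := by
      rw [← div_eq_mul_inv, div_le_iff₀ he]
      exact h1
    linarith
  ------------------------------------------------------------------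
  -- Limits of the comparison functions
  ------------------------------------------------------------------
  have hexp0 : ∀ a : ℝ, 0 < a → Tendsto (fun t : ℝ => Real.exp (-(a * t))) atTop (nhds 0) := by
    intro a ha
    apply Real.tendsto_exp_atBot.comp
    have h1 : Tendsto (fun t : ℝ => a * t) atTop atTop :=
      Tendsto.const_mul_atTop ha tendsto_id
    exact tendsto_neg_atBot_iff.2 h1
  have hUten : Tendsto (fun T => Λ / μ + (N 0 - Λ / μ) * Real.exp (-(μ * T))) atTop
      (nhds (Λ / μ)) := by
    have := (((hexp0 μ hμ).const_mul (N 0 - Λ / μ)).const_add (Λ / μ))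
    simpa using this
  have hLten : Tendsto (fun T => Λ / (μ + dI + dA + dH)
      + (N 0 - Λ / (μ + dI + dA + dH)) * Real.exp (-((μ + dI + dA + dH) * T))) atTop
      (nhds (Λ / (μ + dI + dA + dH))) := by
    have := (((hexp0 _ hMpos).const_mul (N 0 - Λ / (μ + dI + dA + dH))).const_add
      (Λ / (μ + dI + dA + dH)))
    simpa using this
  have hNle : ∀ᶠ t in atTop, N t ≤ Λ / μ + (N 0 - Λ / μ) * Real.exp (-(μ * t)) :=
    (eventually_ge_atTop 0).mono fun t ht => hub t ht
  have hNge : ∀ᶠ t in atTop, Λ / (μ + dI + dA + dH)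
      + (N 0 - Λ / (μ + dI + dA + dH)) * Real.exp (-((μ + dI + dA + dH) * t)) ≤ N t :=
    (eventually_ge_atTop 0).mono fun t ht => hlb t ht
  have hbddle : IsBoundedUnder (· ≤ ·) atTop N := by
    obtain ⟨B, hB⟩ := hUten.isBoundedUnder_le
    have hB' : ∀ᶠ t in atTop, Λ / μ + (N 0 - Λ / μ) * Real.exp (-(μ * t)) ≤ B :=
      eventually_map.1 hB
    exact isBoundedUnder_of_eventually_le
      (by filter_upwards [hB', hNle] with t h1 h2 using le_trans h2 h1)
  have hbddge : IsBoundedUnder (· ≥ ·) atTop N := by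
    obtain ⟨B, hB⟩ := hLten.isBoundedUnder_ge
    have hB' : ∀ᶠ t in atTop, B ≤ Λ / (μ + dI + dA + dH)
        + (N 0 - Λ / (μ + dI + dA + dH)) * Real.exp (-((μ + dI + dA + dH) * t)) :=
      eventually_map.1 hB
    exact isBoundedUnder_of_eventually_ge
      (by filter_upwards [hB', hNge] with t h1 h2 using le_trans h1 h2)
  have hlimsup : limsup N atTop ≤ Λ / μ := by
    have h2 : limsup N atTop ≤ limsup (fun T => Λ / μ + (N 0 - Λ / μ) * Real.exp (-(μ * T)))
        atTop := limsup_le_limsup hNle hbddge.isCoboundedUnder_le hUten.isBoundedUnder_le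
    rwa [hUten.limsup_eq] at h2
  have hliminf : Λ / (μ + dI + dA + dH) ≤ liminf N atTop := by
    have h2 : liminf (fun T => Λ / (μ + dI + dA + dH)
        + (N 0 - Λ / (μ + dI + dA + dH)) * Real.exp (-((μ + dI + dA + dH) * T))) atTop
        ≤ liminf N atTop :=
      liminf_le_liminf hNge hLten.isBoundedUnder_ge hbddle.isCoboundedUnder_ge
    rwa [hLten.liminf_eq] at h2
  refine ⟨hliminf, hlimsup, ?_⟩
  ------------------------------------------------------------------
  -- Attraction to the region
  ------------------------------------------------------------------
  have hLU : Λ / (μ + dI + dA + dH) ≤ Λ / μ := by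
    rw [div_le_div_iff₀ hMpos hμ]
    nlinarith
  have hLpos : 0 < Λ / (μ + dI + dA + dH) := div_pos hΛ hMpos
  have hEten : Tendsto (fun t => |N 0 - Λ / μ| * Real.exp (-(μ * t))
      + |N 0 - Λ / (μ + dI + dA + dH)| * Real.exp (-((μ + dI + dA + dH) * t))) atTop
      (nhds 0) := by
    have := ((hexp0 μ hμ).const_mul |N 0 - Λ / μ|).add
      ((hexp0 _ hMpos).const_mul |N 0 - Λ / (μ + dI + dA + dH)|)
    simpa using this
  apply squeeze_zero' (Filter.Eventually.of_forall fun t => Metric.infDist_nonneg) ?_ hEten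
  filter_upwards [eventually_ge_atTop (0:ℝ)] with t ht
  have hNt := hNt_pos t ht
  set cm := max (Λ / (μ + dI + dA + dH)) (min (Λ / μ) (N t)) with hcm
  have hcmL : Λ / (μ + dI + dA + dH) ≤ cm := le_max_left _ _
  have hcmU : cm ≤ Λ / μ := max_le hLU (min_le_left _ _)
  have hymem : (fun i => cm / N t * x t i) ∈
      {y : Fin 7 → ℝ | (∀ i, 0 ≤ y i) ∧
        Λ / (μ + dI + dA + dH) ≤ (∑ i, y i) ∧ (∑ i, y i) ≤ Λ / μ} := by
    have hsum : (∑ i, cm / N t * x t i) = cm := by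
      rw [← Finset.mul_sum]
      have : (∑ i, x t i) = N t := rfl
      rw [this, div_mul_cancel₀ _ hNt.ne']
    refine ⟨fun i => mul_nonneg (div_nonneg (hLpos.le.trans hcmL) hNt.le) (hpos t ht i).le, ?_, ?_⟩
    · rw [hsum]; exact hcmL
    · rw [hsum]; exact hcmU
  have hd : dist (x t) (fun i => cm / N t * x t i) ≤ |N t - cm| := by
    refine (dist_pi_le_iff (abs_nonneg _)).2 fun i => ?_
    rw [Real.dist_eq]
    have he : cm / N t * N t = cm := div_mul_cancel₀ _ hNt.ne'
    have hrw : x t i - cm / N t * x t i = x t i * (N t - cm) / N t := by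
      rw [eq_div_iff hNt.ne']
      linear_combination (-(x t i)) * he
    rw [hrw, abs_div, abs_mul, abs_of_pos hNt, div_le_iff₀ hNt]
    have h1 : |x t i| ≤ N t := by
      rw [abs_of_pos (hpos t ht i)]
      exact hcomp_le t ht i
    calc |x t i| * |N t - cm| ≤ N t * |N t - cm| :=
          mul_le_mul_of_nonneg_right h1 (abs_nonneg _)
      _ = |N t - cm| * N t := mul_comm _ _
  have hclamp : |N t - cm| ≤ |N 0 - Λ / μ| * Real.exp (-(μ * t))
      + |N 0 - Λ / (μ + dI + dA + dH)| * Real.exp (-((μ + dI + dA + dH) * t)) := by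
    have hu' := hub t ht
    have hl' := hlb t ht
    have he1 : (0:ℝ) < Real.exp (-(μ * t)) := Real.exp_pos _
    have he2 : (0:ℝ) < Real.exp (-((μ + dI + dA + dH) * t)) := Real.exp_pos _
    rcases le_total (N t) (Λ / (μ + dI + dA + dH)) with h | h
    · have hcmeq : cm = Λ / (μ + dI + dA + dH) := by
        rw [hcm, min_eq_right (h.trans hLU), max_eq_left h]
      rw [hcmeq, abs_sub_comm, abs_of_nonneg (by linarith)]
      have h3 : (Λ / (μ + dI + dA + dH) - N 0) * Real.exp (-((μ + dI + dA + dH) * t))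
          ≤ |N 0 - Λ / (μ + dI + dA + dH)| * Real.exp (-((μ + dI + dA + dH) * t)) := by
        apply mul_le_mul_of_nonneg_right _ he2.le
        rw [abs_sub_comm]
        exact le_abs_self _
      linarith [mul_nonneg (abs_nonneg (N 0 - Λ / μ)) he1.le, h3, hl']
    · rcases le_total (N t) (Λ / μ) with h2 | h2
      · have hcmeq : cm = N t := by rw [hcm, min_eq_right h2, max_eq_right h]
        rw [hcmeq, sub_self, abs_zero]
        positivity
      · have hcmeq : cm = Λ / μ := by rw [hcm, min_eq_left h2, max_eq_right hLU]
        rw [hcmeq, abs_of_nonneg (by linarith)]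
        have h3 : (N 0 - Λ / μ) * Real.exp (-(μ * t))
            ≤ |N 0 - Λ / μ| * Real.exp (-(μ * t)) :=
          mul_le_mul_of_nonneg_right (le_abs_self _) he1.le
        linarith [mul_nonneg (abs_nonneg (N 0 - Λ / (μ + dI + dA + dH))) he2.le, h3, hu']
  exact le_trans (Metric.infDist_le_dist_of_mem hymem) (le_trans hd hclamp)
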